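/- arXiv:1506.05411 — 4 statements merged into one kernel-verified Lean document; each statement's English description precedes it below -/
import Mathlib

section
/- For every nonzero Gaussian integer z, the sum over all divisors (up to associates) of z of the reciprocal of the fourth power of their absolute values is strictly less than ζ(2)² = π⁴/36. -/
open Real

def grep' (x : GaussianInt) : ℤ × ℤ :=
  if 0 < x.re ∧ 0 ≤ x.im then (x.re, x.im)
  else if 0 < x.im ∧ x.re ≤ 0 then (x.im, -x.re)
  else if x.re < 0 ∧ x.im ≤ 0 then (-x.re, -x.im)
  else (-x.im, x.re)

lemma grep_spec (x : GaussianInt) (hx : x ≠ 0) :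
    0 < (grep' x).1 ∧ 0 ≤ (grep' x).2 ∧
    (grep' x).1 ^ 2 + (grep' x).2 ^ 2 = x.norm ∧
    Associated x ⟨(grep' x).1, (grep' x).2⟩ := by
  have hx' : x.re ≠ 0 ∨ x.im ≠ 0 := by
    by_contra h; push_neg at h
    exact hx (Zsqrtd.ext (by simpa using h.1) (by simpa using h.2))
  have hu1 : IsUnit (⟨0, 1⟩ : GaussianInt) := by
    refine IsUnit.of_mul_eq_one ⟨0, -1⟩ ?_
    ext <;> simp [Zsqrtd.re_mul, Zsqrtd.im_mul]
  have hu2 : IsUnit (⟨0, -1⟩ : GaussianInt) := by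
    refine IsUnit.of_mul_eq_one ⟨0, 1⟩ ?_
    ext <;> simp [Zsqrtd.re_mul, Zsqrtd.im_mul]
  have hu3 : IsUnit (⟨-1, 0⟩ : GaussianInt) := by
    refine IsUnit.of_mul_eq_one ⟨-1, 0⟩ ?_
    ext <;> simp [Zsqrtd.re_mul, Zsqrtd.im_mul]
  unfold grep'
  split_ifs with h1 h2 h3
  · refine ⟨h1.1, h1.2, ?_, ?_⟩
    · simp only [Zsqrtd.norm_def]; ring
    · have : (⟨x.re, x.im⟩ : GaussianInt) = x := rfl
      rw [this]
  · refine ⟨h2.1, show (0:ℤ) ≤ -x.re by omega, ?_, ?_⟩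
    · simp only [Zsqrtd.norm_def]; ring
    · exact ⟨hu2.unit, by rw [IsUnit.unit_spec]; ext <;>
        simp [Zsqrtd.re_mul, Zsqrtd.im_mul] <;> ring⟩
  · refine ⟨show (0:ℤ) < -x.re by omega, show (0:ℤ) ≤ -x.im by omega, ?_, ?_⟩
    · simp only [Zsqrtd.norm_def]; ring
    · exact ⟨hu3.unit, by rw [IsUnit.unit_spec]; ext <;>
        simp [Zsqrtd.re_mul, Zsqrtd.im_mul] <;> ring⟩
  · push_neg at h1 h2 h3
    have him : x.im < 0 := by
      by_contra h; push_neg at h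
      rcases h.lt_or_eq with hi | hi
      · exact absurd (h1 (h2 hi)) (not_lt.mpr h)
      · rcases lt_trichotomy x.re 0 with hr | hr | hr
        · exact absurd (h3 hr) (by omega)
        · exact absurd hx' (by push_neg; omega)
        · exact absurd (h1 hr) (by omega)
    have hre : 0 ≤ x.re := by
      by_contra h; push_neg at h
      exact absurd (h3 h) (by omega)
    refine ⟨by omega, hre, ?_, ?_⟩
    · simp only [Zsqrtd.norm_def]; ring
    · exact ⟨hu1.unit, by rw [IsUnit.unit_spec]; ext <;>
        simp [Zsqrtd.re_mul, Zsqrtd.im_mul] <;> ring⟩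

lemma grep_assoc {x y : GaussianInt} (hx : x ≠ 0) (hy : y ≠ 0)
    (hAx : Associated x ⟨(grep' x).1, (grep' x).2⟩)
    (hAy : Associated y ⟨(grep' y).1, (grep' y).2⟩)
    (h : grep' x = grep' y) : Associated x y := by
  rw [h] at hAx
  exact hAx.trans hAy.symm

noncomputable def gg (x : GaussianInt) : ℕ × ℕ :=
  ((grep' x).1.toNat, (grep' x).2.toNat + 1)

/-- For every nonzero Gaussian integer `z`, the sum over all divisors of `z`
(one per associate class) of the reciprocal of the fourth power of their
absolute values (i.e. `1 / N(x)^2`) is strictly less than `ζ(2)^2 = π^4/36`. -/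
theorem delta_neg_four_lt_zeta_two_sq (z : GaussianInt) (hz : z ≠ 0)
    (S : Finset GaussianInt) (hSdvd : ∀ y ∈ S, y ∣ z)
    (hS : ∀ x : GaussianInt, x ∣ z → ∃! y, y ∈ S ∧ Associated x y) :
    ∑ x ∈ S, 1 / ((Zsqrtd.norm x : ℝ)) ^ 2 < π ^ 4 / 36 := by
  have hne : ∀ x ∈ S, x ≠ 0 := by
    intro x hxS h0
    exact hz (zero_dvd_iff.mp (h0 ▸ hSdvd x hxS))
  -- injectivity of gg on S
  have hinj : ∀ x ∈ S, ∀ y ∈ S, gg x = gg y → x = y := by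
    intro x hxS y hyS hgxy
    obtain ⟨hax, _, _, hAx⟩ := grep_spec x (hne x hxS)
    obtain ⟨hay, hby, _, hAy⟩ := grep_spec y (hne y hyS)
    have hgr : grep' x = grep' y := by
      have h1 := congrArg Prod.fst hgxy
      have h2 := congrArg Prod.snd hgxy
      simp only [gg] at h1 h2
      obtain ⟨hax', hbx', _, _⟩ := grep_spec x (hne x hxS)
      exact Prod.ext (by omega) (by omega)
    have hassoc : Associated x y := grep_assoc (hne x hxS) (hne y hyS) hAx hAy hgr
    obtain ⟨w, hw, hu⟩ := hS x (hSdvd x hxS)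
    have hxw : x = w := hu x ⟨hxS, Associated.refl x⟩
    have hyw : y = w := hu y ⟨hyS, hassoc⟩
    rw [hxw, hyw]
  -- pointwise bound
  have key : ∀ x ∈ S, (1:ℝ) / ((Zsqrtd.norm x : ℝ)) ^ 2
      ≤ 1 / ((((gg x).1 * (gg x).2 : ℕ)) : ℝ) ^ 2 := by
    intro x hxS
    obtain ⟨ha, hb, hn, -⟩ := grep_spec x (hne x hxS)
    set a := (grep' x).1 with ha'
    set b := (grep' x).2 with hb'
    have h1 : ((gg x).1 : ℤ) = a := by simp [gg]; omega
    have h2 : ((gg x).2 : ℤ) = b + 1 := by simp [gg]; omega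
    have hle : (((gg x).1 * (gg x).2 : ℕ) : ℤ) ≤ x.norm := by
      push_cast [h1, h2]
      rw [← hn]
      rcases le_or_gt 1 b with hb1 | hb1
      · nlinarith [sq_nonneg (a - b)]
      · have hb0 : b = 0 := by omega
        rw [hb0]; nlinarith
    have hpos : (0:ℤ) < (((gg x).1 * (gg x).2 : ℕ) : ℤ) := by
      push_cast [h1, h2]; nlinarith
    have hposR : (0:ℝ) < (((gg x).1 * (gg x).2 : ℕ) : ℝ) := by exact_mod_cast hpos
    have hleR : (((gg x).1 * (gg x).2 : ℕ) : ℝ) ≤ (x.norm : ℝ) := by exact_mod_cast hle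
    gcongr
  -- replace sum by sum over image
  have h2 : ∑ x ∈ S, (1:ℝ) / ((((gg x).1 * (gg x).2 : ℕ)) : ℝ) ^ 2
      = ∑ p ∈ S.image gg, (1:ℝ) / (((p.1 * p.2 : ℕ)) : ℝ) ^ 2 := by
    rw [Finset.sum_image hinj]
  set T := S.image gg with hT
  set M := T.sup (fun p => max p.1 p.2) with hM
  have hsub : T ⊆ Finset.Icc 1 M ×ˢ Finset.Icc 1 M := by
    intro p hp
    obtain ⟨x, hxS, hgx⟩ := Finset.mem_image.mp hp
    obtain ⟨ha, hb, _, _⟩ := grep_spec x (hne x hxS)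
    have hp1 : 1 ≤ p.1 := by
      rw [← hgx]; simp [gg]; omega
    have hp2 : 1 ≤ p.2 := by
      rw [← hgx]; simp [gg]
    have hle1 : p.1 ≤ M := le_trans (le_max_left _ _) (Finset.le_sup (f := fun p => max p.1 p.2) hp)
    have hle2 : p.2 ≤ M := le_trans (le_max_right _ _) (Finset.le_sup (f := fun p => max p.1 p.2) hp)
    simp [Finset.mem_product, Finset.mem_Icc]
    exact ⟨⟨hp1, hle1⟩, hp2, hle2⟩
  have h3 : ∑ p ∈ T, (1:ℝ) / (((p.1 * p.2 : ℕ)) : ℝ) ^ 2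
      ≤ ∑ p ∈ Finset.Icc 1 M ×ˢ Finset.Icc 1 M, (1:ℝ) / (((p.1 * p.2 : ℕ)) : ℝ) ^ 2 := by
    apply Finset.sum_le_sum_of_subset_of_nonneg hsub
    intro i _ _
    positivity
  set P := ∑ m ∈ Finset.Icc 1 M, (1:ℝ) / (m : ℝ) ^ 2 with hP
  have h4 : ∑ p ∈ Finset.Icc 1 M ×ˢ Finset.Icc 1 M, (1:ℝ) / (((p.1 * p.2 : ℕ)) : ℝ) ^ 2
      = P * P := by
    rw [hP, Finset.sum_mul_sum, Finset.sum_product]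
    apply Finset.sum_congr rfl
    intro m _
    apply Finset.sum_congr rfl
    intro n _
    push_cast
    ring
  have hP0 : 0 ≤ P := by
    apply Finset.sum_nonneg
    intro i _
    positivity
  have hPlt : P < π ^ 2 / 6 := by
    have hzeta := hasSum_zeta_two
    have hsummable := hzeta.summable
    have hnotmem : (M + 1) ∉ Finset.Icc 1 M := by simp
    have hins : ∑ m ∈ insert (M + 1) (Finset.Icc 1 M), (1:ℝ) / (m : ℝ) ^ 2
        ≤ π ^ 2 / 6 := by
      rw [← hzeta.tsum_eq]
      apply Summable.sum_le_tsum
      intro i _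
      positivity
      exact hsummable
    rw [Finset.sum_insert hnotmem] at hins
    have hterm : (0:ℝ) < 1 / ((M + 1 : ℕ) : ℝ) ^ 2 := by positivity
    linarith
  calc ∑ x ∈ S, 1 / ((Zsqrtd.norm x : ℝ)) ^ 2
      ≤ ∑ x ∈ S, (1:ℝ) / ((((gg x).1 * (gg x).2 : ℕ)) : ℝ) ^ 2 := Finset.sum_le_sum key
    _ = ∑ p ∈ T, (1:ℝ) / (((p.1 * p.2 : ℕ)) : ℝ) ^ 2 := h2
    _ ≤ ∑ p ∈ Finset.Icc 1 M ×ˢ Finset.Icc 1 M, (1:ℝ) / (((p.1 * p.2 : ℕ)) : ℝ) ^ 2 := h3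
    _ = P * P := h4
    _ < (π ^ 2 / 6) * (π ^ 2 / 6) := by
        apply mul_self_lt_mul_self hP0 hPlt
    _ = π ^ 4 / 36 := by ring
end

section
/- There is no positive integer r that is perfect and all of whose prime factors are congruent to 2 modulo 3. -/
open ArithmeticFunction ArithmeticFunction.sigma in
lemma key_sigma_mod3 : ∀ n : ℕ, 0 < n → (∀ p : ℕ, p.Prime → p ∣ n → (p : ZMod 3) = 2) →
    ((σ 1 n : ZMod 3) ≠ 2 ∧ ((σ 1 n : ZMod 3) = 1 → (n : ZMod 3) = 1)) := by
  refine Nat.recOnPosPrimePosCoprime ?_ ?_ ?_ ?_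
  · intro p k hp hk _ hdvd
    have hp2 : (p : ZMod 3) = 2 := hdvd p hp (dvd_pow_self p hk.ne')
    have hneg : (p : ZMod 3) = -1 := by rw [hp2]; decide
    have hσ : ((σ 1 (p ^ k) : ℕ) : ZMod 3) = ∑ j ∈ Finset.range (k + 1), (-1 : ZMod 3) ^ j := by
      rw [sigma_one_apply_prime_pow hp]
      push_cast
      simp [hneg]
    rw [neg_one_geom_sum] at hσ
    have hcast : ((p ^ k : ℕ) : ZMod 3) = (-1 : ZMod 3) ^ k := by push_cast [hneg]; ring
    rcases Nat.even_or_odd k with he | ho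
    · have : ¬ Even (k + 1) := by simp [Nat.even_add_one, he]
      rw [if_neg this] at hσ
      constructor
      · rw [hσ]; decide
      · intro _; rw [hcast, he.neg_one_pow]
    · have : Even (k + 1) := by simp [Nat.even_add_one, ho]
      rw [if_pos this] at hσ
      constructor
      · rw [hσ]; decide
      · intro h; rw [hσ] at h; exact absurd h (by decide)
  · intro h; exact absurd h (lt_irrefl 0)
  · intro _ _
    have : σ 1 1 = 1 := by simp [ArithmeticFunction.sigma_one_apply]
    rw [this]
    exact ⟨by decide, fun _ => by norm_num⟩
  · intro a b ha hb hab iha ihb _ hdvd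
    have h1 := iha (by omega) (fun p hp hd => hdvd p hp (hd.mul_right b))
    have h2 := ihb (by omega) (fun p hp hd => hdvd p hp (hd.mul_left a))
    have hmul : ((σ 1 (a * b) : ℕ) : ZMod 3) = ((σ 1 a : ℕ) : ZMod 3) * ((σ 1 b : ℕ) : ZMod 3) := by
      rw [isMultiplicative_sigma.map_mul_of_coprime hab]; push_cast; ring
    constructor
    · rw [hmul]
      intro h
      rcases (by decide : ∀ x y : ZMod 3, x * y = 2 → x = 2 ∨ y = 2) _ _ h with h' | h'
      · exact h1.1 h'
      · exact h2.1 h'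
    · rw [hmul]
      intro h
      rcases (by decide : ∀ x y : ZMod 3, x ≠ 2 → y ≠ 2 → x * y = 1 → x = 1 ∧ y = 1) _ _ h1.1 h2.1 h with ⟨ha1, hb1⟩
      push_cast
      rw [h1.2 ha1, h2.2 hb1]; ring

/-- There is no positive perfect integer all of whose prime factors are `≡ 2 (mod 3)`. -/
theorem no_perfect_all_primes_two_mod_three :
    ¬ ∃ r : ℕ, 0 < r ∧ Nat.Perfect r ∧ ∀ p : ℕ, p.Prime → p ∣ r → p % 3 = 2 := by
  rintro ⟨r, hr, hperf, hprimes⟩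
  have hcast : ∀ p : ℕ, p.Prime → p ∣ r → (p : ZMod 3) = 2 := by
    intro p hp hd
    have := hprimes p hp hd
    calc (p : ZMod 3) = ((p % 3 : ℕ) : ZMod 3) := (ZMod.natCast_mod p 3).symm
      _ = 2 := by rw [this]; rfl
  obtain ⟨h2, h1⟩ := key_sigma_mod3 r hr hcast
  have hσ : ArithmeticFunction.sigma 1 r = 2 * r := by
    rw [ArithmeticFunction.sigma_one_apply]
    exact (Nat.perfect_iff_sum_divisors_eq_two_mul hr).mp hperf
  have h3 : ¬ (3 ∣ r) := by
    intro h
    have := hprimes 3 (by norm_num) h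
    omega
  have hr3 : (r : ZMod 3) ≠ 0 := by
    intro h
    exact h3 ((ZMod.natCast_eq_zero_iff r 3).mp h)
  have hσc : ((ArithmeticFunction.sigma 1 r : ℕ) : ZMod 3) = 2 * (r : ZMod 3) := by
    rw [hσ]; push_cast; ring
  rcases (by decide : ∀ x : ZMod 3, x = 0 ∨ x = 1 ∨ x = 2) (r : ZMod 3) with h | h | h
  · exact hr3 h
  · rw [h] at hσc; norm_num at hσc; exact h2 hσc
  · rw [h] at hσc
    have : ((ArithmeticFunction.sigma 1 r : ℕ) : ZMod 3) = 1 := by rw [hσc]; decide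
    have := h1 this
    rw [h] at this
    exact absurd this (by decide)
end

section
/- If r is an odd perfect number with Eulerian form r = p^k · m² (p prime, p ≡ k ≡ 1 (mod 4), gcd(p,m)=1), then 3 does not divide σ(p^k)·σ(m²) when all prime divisors of r are ≡ 2 (mod 3); consequently no odd perfect number has all its prime factors ≡ 2 (mod 3). -/
open ArithmeticFunction Finset
open scoped ArithmeticFunction.sigma

lemma three_dvd_geom_sum {q : ℕ} (hq : q % 3 = 2) {a : ℕ} (ha : a % 2 = 1) :
    3 ∣ ∑ k ∈ range (a + 1), q ^ k := by
  obtain ⟨t, ht⟩ : ∃ t, a + 1 = 2 * t := ⟨(a+1)/2, by omega⟩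
  rw [ht]; clear ht ha
  induction t with
  | zero => simp
  | succ n ih =>
    have : ∑ k ∈ range (2 * (n+1)), q ^ k
        = (∑ k ∈ range (2 * n), q ^ k) + q ^ (2*n) * (1 + q) := by
      have h2 : 2 * (n+1) = (2*n) + 1 + 1 := by ring
      rw [h2, Finset.sum_range_succ, Finset.sum_range_succ]
      ring
    rw [this]
    have h3 : 3 ∣ 1 + q := by omega
    exact Nat.dvd_add ih (Dvd.dvd.mul_left h3 _)

lemma geom_sum_odd {q : ℕ} (hq : q % 2 = 1) {a : ℕ} (ha : a % 2 = 0) :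
    (∑ k ∈ range (a + 1), q ^ k) % 2 = 1 := by
  rw [Finset.sum_nat_mod]
  have : ∀ k ∈ range (a+1), q ^ k % 2 = 1 % 2 := by
    intro k _
    simp [Nat.pow_mod, hq]
  rw [Finset.sum_congr rfl this, Finset.sum_const]
  simp
  omega

lemma key (r : ℕ) (hr0 : 0 < r) (hodd : Odd r) (hperf : Nat.Perfect r)
    (hq : ∀ q : ℕ, q.Prime → q ∣ r → q % 3 = 2) : False := by
  have h3r : ¬ 3 ∣ r := fun h => by have := hq 3 (by norm_num) h; norm_num at this
  have hσ : σ 1 r = 2 * r := by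
    rw [sigma_one_apply]
    exact (Nat.perfect_iff_sum_divisors_eq_two_mul hr0).mp hperf
  have hfac : σ 1 r = ∏ p ∈ r.primeFactors, σ 1 (p ^ r.factorization p) := by
    rw [isMultiplicative_sigma.multiplicative_factorization _ hr0.ne']
    rfl
  -- product is odd if all exponents even
  have hodd' : ∀ p ∈ r.primeFactors, (σ 1 (p ^ r.factorization p)) % 2 = 1 → True := fun _ _ _ => trivial
  by_cases hall : ∀ p ∈ r.primeFactors, r.factorization p % 2 = 0
  · -- σ r odd, but σ r = 2r even
    have : (σ 1 r) % 2 = 1 := by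
      rw [hfac, Finset.prod_nat_mod]
      have : ∀ p ∈ r.primeFactors, σ 1 (p ^ r.factorization p) % 2 = 1 % 2 := by
        intro p hp
        have hpp := Nat.prime_of_mem_primeFactors hp
        have hp2 : p % 2 = 1 := by
          have hpdvd := Nat.dvd_of_mem_primeFactors hp
          have hpne : p ≠ 2 := by
            rintro rfl
            exact (Nat.not_even_iff_odd.mpr hodd) (even_iff_two_dvd.mpr hpdvd)
          exact Nat.odd_iff.mp (hpp.odd_of_ne_two hpne)
        rw [sigma_one_apply_prime_pow hpp]
        simp [geom_sum_odd hp2 (hall p hp)]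
      rw [Finset.prod_congr rfl this, Finset.prod_const]
      simp
    omega
  · push_neg at hall
    obtain ⟨p, hp, hexp⟩ := hall
    have hpp := Nat.prime_of_mem_primeFactors hp
    have h3 : 3 ∣ σ 1 (p ^ r.factorization p) := by
      rw [sigma_one_apply_prime_pow hpp]
      exact three_dvd_geom_sum (hq p hpp (Nat.dvd_of_mem_primeFactors hp)) (by omega)
    have hdvd : σ 1 (p ^ r.factorization p) ∣ σ 1 r := by
      rw [hfac]
      exact Finset.dvd_prod_of_mem _ hp
    have : 3 ∣ 2 * r := hσ ▸ h3.trans hdvd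
    exact h3r ((Nat.Coprime.dvd_of_dvd_mul_left (by norm_num) this))

/-- If `r = p^k · m²` is an odd perfect number in Eulerian form and all prime
divisors of `r` are `≡ 2 (mod 3)`, then `3 ∤ σ(p^k)·σ(m²)`; consequently no odd
perfect number has all of its prime factors `≡ 2 (mod 3)`. -/
theorem odd_perfect_eulerian_sigma_not_dvd_three :
    (∀ r p k m : ℕ, r = p ^ k * m ^ 2 → p.Prime → p % 4 = 1 → k % 4 = 1 →
        ¬ p ∣ m → 0 < m → Odd r → Nat.Perfect r →
        (∀ q : ℕ, q.Prime → q ∣ r → q % 3 = 2) →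
        ¬ (3 ∣ (ArithmeticFunction.sigma 1) (p ^ k) * (ArithmeticFunction.sigma 1) (m ^ 2))) ∧
      ¬ ∃ r : ℕ, 0 < r ∧ Odd r ∧ Nat.Perfect r ∧
          ∀ q : ℕ, q.Prime → q ∣ r → q % 3 = 2 := by
  constructor
  · intro r p k m hr hp hp4 hk4 hpm hm hodd hperf hq h3
    have hcop : Nat.Coprime (p ^ k) (m ^ 2) :=
      Nat.Coprime.pow k 2 ((Nat.Prime.coprime_iff_not_dvd hp).mpr hpm)
    have : σ 1 (p ^ k) * σ 1 (m ^ 2) = σ 1 r := by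
      rw [hr, isMultiplicative_sigma.map_mul_of_coprime hcop]
    rw [this] at h3
    have hr0 : 0 < r := hperf.2
    exact key r hr0 hodd hperf hq
  · rintro ⟨r, hr0, hodd, hperf, hq⟩
    exact key r hr0 hodd hperf hq
end

section
/- Suppose r = p^k m² is an odd perfect number in Eulerian form with p ≡ 5 (mod 8), where m = m₁m₂ with every prime factor of m₁ ≡ 5 (mod 8) and every prime factor of m₂ ≡ 7 (mod 8). Write m₁ = Π_{j=1}^{s} q_j^{α_j} and let L be the number of indices j with α_j odd. If k ≡ 1 (mod 8) then L is odd, and if k ≡ 5 (mod 8) then L is even. -/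
open Finset ArithmeticFunction
open scoped ArithmeticFunction.sigma

private lemma natCast_zmod_of_mod {n x c : ℕ} [NeZero n] (h : x % n = c) :
    ((x : ℕ) : ZMod n) = ((c : ℕ) : ZMod n) := by
  rw [← ZMod.natCast_mod x n, h]

private lemma geom_five_zmod8 (n : ℕ) :
    ∑ i ∈ Finset.range (2 * n), (5 : ZMod 8) ^ i = 6 * n := by
  induction n with
  | zero => simp
  | succ n ih =>
      have h2 : 2 * (n + 1) = 2 * n + 1 + 1 := by ring
      have h5 : (5 : ZMod 8) ^ (2 * n) = 1 := by
        rw [pow_mul, show ((5 : ZMod 8) ^ 2) = 1 by decide, one_pow]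
      rw [h2, Finset.sum_range_succ, Finset.sum_range_succ, ih, pow_succ, h5]
      push_cast
      ring

private lemma sigma_prime_pow_mod4 {t e : ℕ} (ht : t.Prime) (ht4 : t % 4 = 3)
    (he : Even e) : ((σ 1 (t ^ e) : ℕ) : ZMod 4) = 1 := by
  rw [ArithmeticFunction.sigma_one_apply_prime_pow ht]
  push_cast
  have htc : ((t : ZMod 4)) = -1 := by
    have := natCast_zmod_of_mod ht4; rw [this]; decide
  rw [htc, neg_one_geom_sum]
  simp [Nat.even_add_one, he]

private lemma sigma_prime_pow_mod4' {t e : ℕ} (ht : t.Prime) (ht4 : t % 4 = 1) :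
    ((σ 1 (t ^ e) : ℕ) : ZMod 4) = ((e + 1 : ℕ) : ZMod 4) := by
  rw [ArithmeticFunction.sigma_one_apply_prime_pow ht]
  push_cast
  have htc : ((t : ZMod 4)) = 1 := by
    have := natCast_zmod_of_mod ht4; simpa using this
  rw [htc]
  simp

/-- Let `r = p^k m²` be an odd perfect number in Eulerian form with `p ≡ 5 (mod 8)`,
where `m = m₁m₂`, every prime factor of `m₁` is `≡ 5 (mod 8)` and every prime factor
of `m₂` is `≡ 7 (mod 8)`. Writing `m₁ = Π q_j^{α_j}` (distinct primes `q_j`,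
`α_j ≥ 1`) and letting `L` be the number of indices with `α_j` odd: if
`k ≡ 1 (mod 8)` then `L` is odd, and if `k ≡ 5 (mod 8)` then `L` is even. -/
theorem odd_perfect_parity_of_L (r p k m m₁ m₂ s : ℕ) (q α : Fin s → ℕ)
    (hr : r = p ^ k * m ^ 2) (hp : p.Prime) (hp4 : p % 4 = 1) (hk4 : k % 4 = 1)
    (hpm : ¬ p ∣ m) (hodd : Odd r) (hperf : Nat.Perfect r) (hp8 : p % 8 = 5)
    (hm : m = m₁ * m₂)
    (hm₁ : ∀ t : ℕ, t.Prime → t ∣ m₁ → t % 8 = 5)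
    (hm₂ : ∀ t : ℕ, t.Prime → t ∣ m₂ → t % 8 = 7)
    (hq : ∀ j, (q j).Prime) (hqinj : Function.Injective q)
    (hα : ∀ j, 0 < α j) (hfact : m₁ = ∏ j, q j ^ α j) :
    (k % 8 = 1 → Odd (Finset.univ.filter (fun j => Odd (α j))).card) ∧
      (k % 8 = 5 → Even (Finset.univ.filter (fun j => Odd (α j))).card) := by
  classical
  have hr0 : 0 < r := hperf.2
  have hS : σ 1 r = 2 * r := by
    rw [ArithmeticFunction.sigma_one_apply]
    exact (Nat.perfect_iff_sum_divisors_eq_two_mul hr0).mp hperf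
  -- basic facts
  have hm0 : m ≠ 0 := by
    rintro rfl; simp [hr] at hr0
  have hm₂0 : m₂ ≠ 0 := by rintro rfl; simp [hm] at hm0
  have hmodd : Odd m := by
    rcases Nat.even_or_odd m with he | ho
    · exfalso
      have : Even r := by
        rw [hr, sq]
        exact ((he.mul_left m).mul_left _)
      exact (Nat.not_even_iff_odd.mpr hodd) this
    · exact ho
  -- coprimality
  have hco12 : Nat.Coprime m₁ m₂ := by
    by_contra h
    obtain ⟨t, htp, htd⟩ := Nat.exists_prime_and_dvd h
    have h1 := hm₁ t htp (htd.trans (Nat.gcd_dvd_left _ _))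
    have h2 := hm₂ t htp (htd.trans (Nat.gcd_dvd_right _ _))
    omega
  have hcopm : Nat.Coprime (p ^ k) (m ^ 2) :=
    ((hp.coprime_iff_not_dvd.mpr hpm).pow k 2)
  -- factor sigma
  have hm2eq : m ^ 2 = m₁ ^ 2 * m₂ ^ 2 := by rw [hm]; ring
  have hfac : σ 1 r = σ 1 (p ^ k) * (σ 1 (m₁ ^ 2) * σ 1 (m₂ ^ 2)) := by
    rw [hr, isMultiplicative_sigma.map_mul_of_coprime hcopm, hm2eq,
      isMultiplicative_sigma.map_mul_of_coprime (hco12.pow 2 2)]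
  -- σ(m₁²) mod 4 = (-1)^L
  have hm₁sq : m₁ ^ 2 = ∏ j, q j ^ (2 * α j) := by
    rw [hfact, ← Finset.prod_pow]
    exact Finset.prod_congr rfl fun j _ => by rw [← pow_mul, mul_comm]
  have hX : σ 1 (m₁ ^ 2) = ∏ j, σ 1 (q j ^ (2 * α j)) := by
    rw [hm₁sq]
    refine isMultiplicative_sigma.map_prod _ _ fun x _ y _ hxy => ?_
    exact (((Nat.coprime_primes (hq x) (hq y)).mpr
      (fun h => hxy (hqinj h))).pow _ _)
  set L := (Finset.univ.filter (fun j => Odd (α j))).card with hL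
  have hXmod : ((σ 1 (m₁ ^ 2) : ℕ) : ZMod 4) = (-1 : ZMod 4) ^ L := by
    rw [hX, Nat.cast_prod]
    have hfac2 : ∀ j : Fin s, ((σ 1 (q j ^ (2 * α j)) : ℕ) : ZMod 4)
        = if Odd (α j) then (-1 : ZMod 4) else 1 := by
      intro j
      have hqdvd : q j ∣ m₁ := by
        rw [hfact]
        exact (dvd_pow_self (q j) (hα j).ne').trans
          (Finset.dvd_prod_of_mem _ (Finset.mem_univ j))
      have hq4 : q j % 4 = 1 := by
        have := hm₁ (q j) (hq j) hqdvd; omega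
      rw [sigma_prime_pow_mod4' (hq j) hq4]
      rcases Nat.even_or_odd (α j) with he | ho
      · have hmod : (2 * α j + 1) % 4 = 1 := by
          obtain ⟨b, hb⟩ := he; omega
        rw [natCast_zmod_of_mod hmod]
        simp [Nat.not_odd_iff_even.mpr he]
      · have hmod : (2 * α j + 1) % 4 = 3 := by
          obtain ⟨b, hb⟩ := ho; omega
        rw [natCast_zmod_of_mod hmod]
        simp [ho]
        decide
    calc (∏ j, ((σ 1 (q j ^ (2 * α j)) : ℕ) : ZMod 4))
        = ∏ j, (if Odd (α j) then (-1 : ZMod 4) else 1) :=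
          Finset.prod_congr rfl fun j _ => hfac2 j
      _ = ∏ j ∈ Finset.univ.filter (fun j => Odd (α j)), (-1 : ZMod 4) := by
          rw [Finset.prod_filter]
      _ = (-1 : ZMod 4) ^ L := by rw [Finset.prod_const, hL]
  -- σ(m₂²) mod 4 = 1
  have hYmod : ((σ 1 (m₂ ^ 2) : ℕ) : ZMod 4) = 1 := by
    have hn0 : m₂ ^ 2 ≠ 0 := pow_ne_zero _ hm₂0
    rw [isMultiplicative_sigma.multiplicative_factorization _ hn0]
    rw [Finsupp.prod, Nat.cast_prod]
    refine Finset.prod_eq_one fun t ht => ?_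
    have htmem : t ∈ (m₂ ^ 2).primeFactors := by
      rwa [Nat.support_factorization] at ht
    have htp : t.Prime := Nat.prime_of_mem_primeFactors htmem
    have htdvd : t ∣ m₂ := htp.dvd_of_dvd_pow (Nat.dvd_of_mem_primeFactors htmem)
    have ht4 : t % 4 = 3 := by have := hm₂ t htp htdvd; omega
    have heven : Even ((m₂ ^ 2).factorization t) := by
      rw [Nat.factorization_pow]
      exact ⟨m₂.factorization t, by simp [two_mul]⟩
    exact sigma_prime_pow_mod4 htp ht4 heven
  -- r mod 4 = 1
  have hrmod : ((r : ℕ) : ZMod 4) = 1 := by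
    rw [hr]
    push_cast
    have hpc : ((p : ℕ) : ZMod 4) = 1 := by
      have := natCast_zmod_of_mod hp4; simpa using this
    rw [hpc, one_pow, one_mul]
    rcases Nat.odd_mod_four_iff.mp (Nat.odd_iff.mp hmodd) with h | h <;>
      · have := natCast_zmod_of_mod h
        rw [this]; decide
  -- the main equation mod 4, with σ(p^k) = 2a
  have hApow : σ 1 (p ^ k) = ∑ i ∈ Finset.range (k + 1), p ^ i :=
    ArithmeticFunction.sigma_one_apply_prime_pow hp
  have hpc8 : ((p : ℕ) : ZMod 8) = 5 := by
    have := natCast_zmod_of_mod hp8; simpa using this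
  -- helper to finish each branch
  have key : ∀ c : ZMod 4, (σ 1 (p ^ k)) % 8 = 2 * ((σ 1 (p ^ k) / 2) % 4) % 8 →
      True := fun _ _ => trivial
  have main : ∀ a : ℕ, σ 1 (p ^ k) = 2 * a →
      (1 : ZMod 4) = (a : ZMod 4) * ((-1 : ZMod 4) ^ L * 1) := by
    intro a ha
    have hreq : r = a * (σ 1 (m₁ ^ 2) * σ 1 (m₂ ^ 2)) := by
      have h2 : 2 * r = 2 * (a * (σ 1 (m₁ ^ 2) * σ 1 (m₂ ^ 2))) := by
        rw [← hS, hfac, ha]; ring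
      omega
    calc (1 : ZMod 4) = ((r : ℕ) : ZMod 4) := hrmod.symm
      _ = (a : ZMod 4) * (((σ 1 (m₁ ^ 2) : ℕ) : ZMod 4) *
            ((σ 1 (m₂ ^ 2) : ℕ) : ZMod 4)) := by rw [hreq]; push_cast; ring
      _ = (a : ZMod 4) * ((-1 : ZMod 4) ^ L * 1) := by rw [hXmod, hYmod]
  constructor
  · intro hk8
    -- σ(p^k) ≡ 6 mod 8
    have hsum : ((σ 1 (p ^ k) : ℕ) : ZMod 8) = ((6 : ℕ) : ZMod 8) := by
      rw [hApow, Nat.cast_sum]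
      obtain ⟨t, ht⟩ : ∃ t, k + 1 = 2 * (4 * t + 1) := ⟨k / 8, by omega⟩
      rw [ht]
      simp only [Nat.cast_pow, hpc8]
      rw [geom_five_zmod8]
      push_cast
      ring_nf
      rw [show ((24 : ZMod 8)) = 0 by decide]
      ring_nf
      try decide
    have hmod8 : σ 1 (p ^ k) % 8 = 6 := by
      have := (ZMod.natCast_eq_natCast_iff' _ _ _).mp hsum
      omega
    obtain ⟨a, ha, ha4⟩ : ∃ a, σ 1 (p ^ k) = 2 * a ∧ a % 4 = 3 :=
      ⟨σ 1 (p ^ k) / 2, by omega, by omega⟩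
    have hmain := main a ha
    have hac : (a : ZMod 4) = -1 := by
      have := natCast_zmod_of_mod ha4; rw [this]; decide
    rw [hac, mul_one] at hmain
    rw [← Nat.not_even_iff_odd]
    intro hLe
    rw [hLe.neg_one_pow] at hmain
    simp at hmain
    exact absurd hmain (by decide)
  · intro hk8
    have hsum : ((σ 1 (p ^ k) : ℕ) : ZMod 8) = ((2 : ℕ) : ZMod 8) := by
      rw [hApow, Nat.cast_sum]
      obtain ⟨t, ht⟩ : ∃ t, k + 1 = 2 * (4 * t + 3) := ⟨k / 8, by omega⟩
      rw [ht]
      simp only [Nat.cast_pow, hpc8]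
      rw [geom_five_zmod8]
      push_cast
      ring_nf
      rw [show ((24 : ZMod 8)) = 0 by decide]
      ring_nf
      try decide
    have hmod8 : σ 1 (p ^ k) % 8 = 2 := by
      have := (ZMod.natCast_eq_natCast_iff' _ _ _).mp hsum
      omega
    obtain ⟨a, ha, ha4⟩ : ∃ a, σ 1 (p ^ k) = 2 * a ∧ a % 4 = 1 :=
      ⟨σ 1 (p ^ k) / 2, by omega, by omega⟩
    have hmain := main a ha
    have hac : (a : ZMod 4) = 1 := by
      have := natCast_zmod_of_mod ha4; rw [this]; decide
    rw [hac, mul_one, one_mul] at hmain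
    rcases Nat.even_or_odd L with hLe | hLo
    · exact hLe
    · rw [hLo.neg_one_pow] at hmain
      exact absurd hmain (by decide)
end
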